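/- The function g(k) := (7/60)k³ - k + (1 + k²/20)·sin(k) is nonnegative for all k ≥ 0. -/

import Mathlib

private lemma nonneg_of_deriv (f f' : ℝ → ℝ) (hd : ∀ x, HasDerivAt f (f' x) x)
    (h0 : f 0 = 0) (hf' : ∀ x, 0 ≤ x → 0 ≤ f' x) {x : ℝ} (hx : 0 ≤ x) : 0 ≤ f x := by
  have hmono : MonotoneOn f (Set.Ici 0) := by
    apply monotoneOn_of_deriv_nonneg (convex_Ici 0)
    · exact (Differentiable.continuous fun y => (hd y).differentiableAt).continuousOn
    · intro y _; exact (hd y).differentiableAt.differentiableWithinAt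
    · intro y hy
      rw [interior_Ici] at hy
      rw [(hd y).deriv]
      exact hf' y hy.le
  calc (0:ℝ) = f 0 := h0.symm
    _ ≤ f x := hmono Set.self_mem_Ici hx hx

private lemma sin_ge_1 (x : ℝ) (hx : 0 ≤ x) : x - x ^ 3 / 6 ≤ Real.sin x := by
  have h := nonneg_of_deriv (fun t => Real.sin t - (t - t ^ 3 / 6))
      (fun t => Real.cos t - (1 - t ^ 2 / 2)) ?_ (by norm_num) ?_ hx
  · simpa using h
  · intro t
    have h2 : HasDerivAt (fun t : ℝ => t - t ^ 3 / 6) (1 - t ^ 2 / 2) t := by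
      have := (hasDerivAt_id t).sub ((hasDerivAt_pow 3 t).div_const 6)
      exact this.congr_deriv (by push_cast; ring)
    exact (Real.hasDerivAt_sin t).sub h2
  · intro t _
    have := Real.one_sub_sq_div_two_le_cos (x := t)
    linarith

private lemma cos_le_1 (x : ℝ) (hx : 0 ≤ x) :
    Real.cos x ≤ 1 - x ^ 2 / 2 + x ^ 4 / 24 := by
  have h := nonneg_of_deriv (fun t => 1 - t ^ 2 / 2 + t ^ 4 / 24 - Real.cos t)
      (fun t => -t + t ^ 3 / 6 + Real.sin t) ?_ (by norm_num) ?_ hx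
  · simpa using h
  · intro t
    have h2 : HasDerivAt (fun t : ℝ => 1 - t ^ 2 / 2 + t ^ 4 / 24) (-t + t ^ 3 / 6) t := by
      have := ((hasDerivAt_const t (1:ℝ)).sub ((hasDerivAt_pow 2 t).div_const 2)).add
        ((hasDerivAt_pow 4 t).div_const 24)
      exact this.congr_deriv (by push_cast; ring)
    exact (h2.sub (Real.hasDerivAt_cos t)).congr_deriv (by ring)
  · intro t ht
    have := sin_ge_1 t ht
    linarith

private lemma sin_le_1 (x : ℝ) (hx : 0 ≤ x) :
    Real.sin x ≤ x - x ^ 3 / 6 + x ^ 5 / 120 := by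
  have h := nonneg_of_deriv (fun t => t - t ^ 3 / 6 + t ^ 5 / 120 - Real.sin t)
      (fun t => 1 - t ^ 2 / 2 + t ^ 4 / 24 - Real.cos t) ?_ (by norm_num) ?_ hx
  · simpa using h
  · intro t
    have h2 : HasDerivAt (fun t : ℝ => t - t ^ 3 / 6 + t ^ 5 / 120)
        (1 - t ^ 2 / 2 + t ^ 4 / 24) t := by
      have := ((hasDerivAt_id t).sub ((hasDerivAt_pow 3 t).div_const 6)).add
        ((hasDerivAt_pow 5 t).div_const 120)
      exact this.congr_deriv (by push_cast; ring)
    exact h2.sub (Real.hasDerivAt_sin t)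
  · intro t ht
    have := cos_le_1 t ht
    linarith

private lemma cos_ge_1 (x : ℝ) (hx : 0 ≤ x) :
    1 - x ^ 2 / 2 + x ^ 4 / 24 - x ^ 6 / 720 ≤ Real.cos x := by
  have h := nonneg_of_deriv
      (fun t => Real.cos t - (1 - t ^ 2 / 2 + t ^ 4 / 24 - t ^ 6 / 720))
      (fun t => -Real.sin t - (-t + t ^ 3 / 6 - t ^ 5 / 120)) ?_ (by norm_num) ?_ hx
  · simpa using h
  · intro t
    have h2 : HasDerivAt (fun t : ℝ => 1 - t ^ 2 / 2 + t ^ 4 / 24 - t ^ 6 / 720)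
        (-t + t ^ 3 / 6 - t ^ 5 / 120) t := by
      have := (((hasDerivAt_const t (1:ℝ)).sub ((hasDerivAt_pow 2 t).div_const 2)).add
        ((hasDerivAt_pow 4 t).div_const 24)).sub ((hasDerivAt_pow 6 t).div_const 720)
      exact this.congr_deriv (by push_cast; ring)
    exact (Real.hasDerivAt_cos t).sub h2
  · intro t ht
    have := sin_le_1 t ht
    linarith

private lemma sin_ge_2 (x : ℝ) (hx : 0 ≤ x) :
    x - x ^ 3 / 6 + x ^ 5 / 120 - x ^ 7 / 5040 ≤ Real.sin x := by
  have h := nonneg_of_deriv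
      (fun t => Real.sin t - (t - t ^ 3 / 6 + t ^ 5 / 120 - t ^ 7 / 5040))
      (fun t => Real.cos t - (1 - t ^ 2 / 2 + t ^ 4 / 24 - t ^ 6 / 720)) ?_ (by norm_num) ?_ hx
  · simpa using h
  · intro t
    have h2 : HasDerivAt (fun t : ℝ => t - t ^ 3 / 6 + t ^ 5 / 120 - t ^ 7 / 5040)
        (1 - t ^ 2 / 2 + t ^ 4 / 24 - t ^ 6 / 720) t := by
      have := (((hasDerivAt_id t).sub ((hasDerivAt_pow 3 t).div_const 6)).add
        ((hasDerivAt_pow 5 t).div_const 120)).sub ((hasDerivAt_pow 7 t).div_const 5040)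
      exact this.congr_deriv (by push_cast; ring)
    exact (Real.hasDerivAt_sin t).sub h2
  · intro t ht
    have := cos_ge_1 t ht
    linarith

theorem stmt_3 (k : ℝ) (hk : 0 ≤ k) :
    0 ≤ (7 / 60) * k ^ 3 - k + (1 + k ^ 2 / 20) * Real.sin k := by
  rcases le_or_gt k 4 with h4 | h4
  · have hsin := sin_ge_2 k hk
    have hpos : (0:ℝ) < 1 + k ^ 2 / 20 := by positivity
    have h1 := mul_le_mul_of_nonneg_left hsin hpos.le
    have h2 : 0 ≤ k ^ 7 * (22 - k ^ 2) := by
      apply mul_nonneg (pow_nonneg hk 7)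
      nlinarith
    nlinarith [h1, h2]
  · have hsin : -1 ≤ Real.sin k := Real.neg_one_le_sin k
    have hpos : (0:ℝ) < 1 + k ^ 2 / 20 := by positivity
    have h1 := mul_le_mul_of_nonneg_left hsin hpos.le
    nlinarith [h1, mul_nonneg (mul_nonneg (sub_nonneg.2 h4.le) (sub_nonneg.2 h4.le)) (sub_nonneg.2 h4.le), sq_nonneg (k - 4)]
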